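/- Fix 0 < κ < 1/2 and set t₀ = 1, t_k = ⌊exp(k^{1−κ})⌋ and n_k = t_k − t_{k−1} for k ≥ 1, and θ = κ(1/2 − κ) > 0. Then: (i) n_k k^κ / t_k → 1 − κ as k → ∞; and (ii) ( √(n_k) / (log n_k)^κ ) · ( k^{κ+θ} / √(t_k) ) → √(1−κ) as k → ∞. -/

import Mathlib

open Filter

/-- `t_k = ⌊exp(k^{1-κ})⌋` with `t₀ = 1`. -/
noncomputable def tblock (κ : ℝ) (k : ℕ) : ℕ :=
  if k = 0 then 1 else Nat.floor (Real.exp ((k : ℝ) ^ (1 - κ)))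

/-- `n_k = t_k - t_{k-1}`. -/
noncomputable def nblock (κ : ℝ) (k : ℕ) : ℕ :=
  tblock κ k - tblock κ (k - 1)

section Aux
open Real
variable {κ : ℝ}


-- A
lemma auxA (hκ : κ < 1/2) :
    Tendsto (fun k : ℕ => (k:ℝ) * (1 - (1 - 1/(k:ℝ)) ^ (1-κ))) atTop (nhds (1-κ)) := by
  have h1 : HasDerivAt (fun y : ℝ => y ^ (1-κ)) ((1-κ) * (1:ℝ) ^ (1-κ-1)) 1 :=
    Real.hasDerivAt_rpow_const (Or.inl one_ne_zero)
  have h2 : HasDerivAt (fun x : ℝ => 1 - x) (-1) 0 := (hasDerivAt_id 0).const_sub 1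
  have h3 : HasDerivAt (fun x : ℝ => (1 - x) ^ (1-κ)) ((1-κ) * (1:ℝ) ^ (1-κ-1) * (-1)) 0 := by
    have := HasDerivAt.comp 0 (by simpa using h1) h2
    simpa [Function.comp_def] using this
  rw [hasDerivAt_iff_tendsto_slope] at h3
  have h4 : Tendsto (fun k : ℕ => 1/(k:ℝ)) atTop (nhdsWithin 0 {(0:ℝ)}ᶜ) := by
    rw [tendsto_nhdsWithin_iff]
    refine ⟨tendsto_one_div_atTop_nhds_zero_nat, ?_⟩
    filter_upwards [eventually_ge_atTop 1] with k hk
    simp only [Set.mem_compl_iff, Set.mem_singleton_iff]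
    positivity
  have h5 := (h3.comp h4).neg
  have he : -((1-κ) * (1:ℝ) ^ (1-κ-1) * (-1)) = 1 - κ := by simp
  rw [he] at h5
  refine h5.congr' ?_
  filter_upwards [eventually_ge_atTop 1] with k hk
  have hk0 : (0:ℝ) < (k:ℝ) := by exact_mod_cast hk
  simp only [Function.comp_apply, slope_def_field]
  have hkne : (k:ℝ) ≠ 0 := hk0.ne'
  rw [sub_zero, sub_zero, Real.one_rpow]
  field_simp
  ring

-- B : k^κ * d_k → 1-κ  where d_k = k^{1-κ} - (k-1)^{1-κ}, with ℕ-cast k-1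
lemma auxB (hκ0 : 0 < κ) (hκ : κ < 1/2) :
    Tendsto (fun k : ℕ => (k:ℝ)^κ * ((k:ℝ)^(1-κ) - ((k-1 : ℕ):ℝ)^(1-κ))) atTop (nhds (1-κ)) := by
  refine (auxA hκ).congr' ?_
  filter_upwards [eventually_ge_atTop 1] with k hk
  have hk0 : (0:ℝ) < (k:ℝ) := by exact_mod_cast hk
  have hkne : (k:ℝ) ≠ 0 := hk0.ne'
  have hc : ((k-1 : ℕ):ℝ) = (k:ℝ) - 1 := by
    push_cast [Nat.cast_sub hk]; ring
  have h1 : (k:ℝ) - 1 = (k:ℝ) * (1 - 1/(k:ℝ)) := by field_simp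
  have h2 : ((k:ℝ) - 1)^(1-κ) = (k:ℝ)^(1-κ) * (1 - 1/(k:ℝ))^(1-κ) := by
    rw [h1, Real.mul_rpow hk0.le]
    have : (1:ℝ) ≤ (k:ℝ) := by exact_mod_cast hk
    rw [sub_nonneg, div_le_one hk0]
    exact this
  have h3 : (k:ℝ)^κ * (k:ℝ)^(1-κ) = (k:ℝ) := by
    rw [← Real.rpow_add hk0]; norm_num
  rw [hc, h2]
  linear_combination ((1 - 1/(k:ℝ))^(1-κ) - 1) * h3

-- dpos
lemma aux_dpos (hκ : κ < 1/2) {k : ℕ} (hk : 1 ≤ k) :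
    0 < (k:ℝ)^(1-κ) - ((k-1 : ℕ):ℝ)^(1-κ) := by
  rw [sub_pos]
  apply Real.rpow_lt_rpow (by positivity)
  · exact_mod_cast Nat.sub_lt hk one_pos
  · linarith

-- C : d_k → 0
lemma auxC (hκ0 : 0 < κ) (hκ : κ < 1/2) :
    Tendsto (fun k : ℕ => (k:ℝ)^(1-κ) - ((k-1 : ℕ):ℝ)^(1-κ)) atTop (nhds 0) := by
  have hneg : Tendsto (fun k : ℕ => (k:ℝ)^(-κ)) atTop (nhds 0) :=
    (tendsto_rpow_neg_atTop hκ0).comp tendsto_natCast_atTop_atTop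
  have := (auxB hκ0 hκ).mul hneg
  rw [mul_zero] at this
  refine this.congr' ?_
  filter_upwards [eventually_ge_atTop 1] with k hk
  have hk0 : (0:ℝ) < (k:ℝ) := by exact_mod_cast hk
  rw [mul_comm ((k:ℝ)^κ), mul_assoc, ← Real.rpow_add hk0]
  norm_num

-- E : k^κ (1 - exp(-d_k)) → 1-κ
lemma auxE (hκ0 : 0 < κ) (hκ : κ < 1/2) :
    Tendsto (fun k : ℕ => (k:ℝ)^κ * (1 - Real.exp (-((k:ℝ)^(1-κ) - ((k-1 : ℕ):ℝ)^(1-κ)))))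
      atTop (nhds (1-κ)) := by
  set d : ℕ → ℝ := fun k => (k:ℝ)^(1-κ) - ((k-1 : ℕ):ℝ)^(1-κ) with hd
  have hg : HasDerivAt (fun x : ℝ => 1 - Real.exp (-x)) 1 0 := by
    have := ((hasDerivAt_neg (0:ℝ)).exp).const_sub 1
    simpa using this
  rw [hasDerivAt_iff_tendsto_slope] at hg
  have hdt : Tendsto d atTop (nhdsWithin 0 {(0:ℝ)}ᶜ) := by
    rw [tendsto_nhdsWithin_iff]
    refine ⟨auxC hκ0 hκ, ?_⟩
    filter_upwards [eventually_ge_atTop 1] with k hk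
    exact (aux_dpos hκ hk).ne'
  have h5 := (auxB hκ0 hκ).mul (hg.comp hdt)
  rw [mul_one] at h5
  refine h5.congr' ?_
  filter_upwards [eventually_ge_atTop 1] with k hk
  have hdk := (aux_dpos hκ (κ := κ) hk)
  simp only [Function.comp_apply, slope_def_field]
  show (k:ℝ)^κ * d k * ((1 - Real.exp (-(d k)) - (1 - Real.exp (-(0:ℝ)))) / (d k - 0)) =
    (k:ℝ)^κ * (1 - Real.exp (-(d k)))
  rw [neg_zero, Real.exp_zero, sub_zero]
  field_simp [show d k ≠ 0 from hdk.ne']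
  ring

-- ratio : κ log k / k^{1-κ} → 0
lemma aux_ratio (hκ : κ < 1/2) :
    Tendsto (fun k : ℕ => (κ * Real.log k) / (k:ℝ)^(1-κ)) atTop (nhds 0) := by
  have h := (isLittleO_log_rpow_atTop (by linarith : (0:ℝ) < 1-κ)).const_mul_left κ
  exact h.tendsto_div_nhds_zero.comp tendsto_natCast_atTop_atTop

-- a_k → ∞
lemma aux_aTop (hκ : κ < 1/2) :
    Tendsto (fun k : ℕ => (k:ℝ)^(1-κ)) atTop atTop :=
  (tendsto_rpow_atTop (by linarith)).comp tendsto_natCast_atTop_atTop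

-- F : k^κ * exp(-a_k) → 0
lemma auxF (hκ0 : 0 < κ) (hκ : κ < 1/2) :
    Tendsto (fun k : ℕ => (k:ℝ)^κ * Real.exp (-(k:ℝ)^(1-κ))) atTop (nhds 0) := by
  have hbot : Tendsto (fun k : ℕ => κ * Real.log k - (k:ℝ)^(1-κ)) atTop atBot := by
    have h1 := (aux_ratio (κ := κ) hκ)
    have h2 : Tendsto (fun k : ℕ => (κ * Real.log k) / (k:ℝ)^(1-κ) - 1) atTop (nhds (0-1)) :=
      h1.sub_const 1
    norm_num at h2
    have := (aux_aTop (κ := κ) hκ).atTop_mul_neg (by norm_num : (-1:ℝ) < 0) h2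
    refine this.congr' ?_
    filter_upwards [eventually_ge_atTop 1] with k hk
    have hk0 : (0:ℝ) < (k:ℝ) := by exact_mod_cast hk
    have : ((k:ℝ)^(1-κ)) ≠ 0 := by positivity
    field_simp
  have := Real.tendsto_exp_atBot.comp hbot
  refine this.congr' ?_
  filter_upwards [eventually_ge_atTop 1] with k hk
  have hk0 : (0:ℝ) < (k:ℝ) := by exact_mod_cast hk
  simp only [Function.comp_apply]
  rw [show κ * Real.log k - (k:ℝ)^(1-κ) = Real.log (k:ℝ) * κ + (-(k:ℝ)^(1-κ)) by ring,
    Real.exp_add, ← Real.rpow_def_of_pos hk0]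

-- H : x/(x-1) → 1 composed with exp(a_k)
lemma auxH (hκ : κ < 1/2) :
    Tendsto (fun k : ℕ => Real.exp ((k:ℝ)^(1-κ)) / (Real.exp ((k:ℝ)^(1-κ)) - 1)) atTop (nhds 1) := by
  have hE : Tendsto (fun k : ℕ => Real.exp ((k:ℝ)^(1-κ))) atTop atTop :=
    Real.tendsto_exp_atTop.comp (aux_aTop hκ)
  have h1 : Tendsto (fun x : ℝ => x / (x - 1)) atTop (nhds 1) := by
    have hsub : Tendsto (fun x : ℝ => x - 1) atTop atTop :=
      tendsto_atTop_add_const_right atTop (-1) tendsto_id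
    have h3 : Tendsto (fun x : ℝ => (x-1)⁻¹) atTop (nhds 0) :=
      tendsto_inv_atTop_zero.comp hsub
    have h2 : Tendsto (fun x : ℝ => 1 + (x-1)⁻¹) atTop (nhds (1+0)) :=
      tendsto_const_nhds.add h3
    norm_num at h2
    refine h2.congr' ?_
    filter_upwards [eventually_gt_atTop 1] with x hx
    have : x - 1 ≠ 0 := by linarith
    field_simp
    ring
  exact h1.comp hE

lemma tblock_eq (hκ : κ < 1/2) (k : ℕ) :
    tblock κ k = Nat.floor (Real.exp ((k : ℝ) ^ (1 - κ))) := by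
  rcases eq_or_ne k 0 with rfl | h
  · simp [tblock, Real.zero_rpow (by norm_num; linarith : (1:ℝ) - κ ≠ 0)]
  · simp [tblock, h]

lemma tblock_mono (hκ : κ < 1/2) {j k : ℕ} (h : j ≤ k) : tblock κ j ≤ tblock κ k := by
  rw [tblock_eq hκ, tblock_eq hκ]
  exact Nat.floor_mono (Real.exp_le_exp.mpr
    (Real.rpow_le_rpow (Nat.cast_nonneg _) (Nat.cast_le.mpr h) (by linarith)))

lemma auxI (hκ0 : 0 < κ) (hκ : κ < 1/2) :
    Tendsto (fun k : ℕ => (nblock κ k : ℝ) * (k:ℝ)^κ / (tblock κ k : ℝ)) atTop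
      (nhds (1-κ)) := by
  set a : ℕ → ℝ := fun k => (k:ℝ)^(1-κ) with ha
  set gL : ℕ → ℝ := fun k =>
    (k:ℝ)^κ * (1 - Real.exp (-(a k - a (k-1)))) - (k:ℝ)^κ * Real.exp (-(a k)) with hgL
  set gU : ℕ → ℝ := fun k =>
    (k:ℝ)^κ * (1 - Real.exp (-(a k - a (k-1)))) * (Real.exp (a k)/(Real.exp (a k) - 1))
      + ((k:ℝ)^κ * Real.exp (-(a k))) * (Real.exp (a k)/(Real.exp (a k) - 1)) with hgU
  have hL : Tendsto gL atTop (nhds (1-κ)) := by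
    have := (auxE hκ0 hκ).sub (auxF hκ0 hκ)
    rw [sub_zero] at this
    exact this
  have hU : Tendsto gU atTop (nhds (1-κ)) := by
    have := ((auxE hκ0 hκ).mul (auxH hκ)).add ((auxF hκ0 hκ).mul (auxH hκ))
    simpa only [mul_one, add_zero] using this
  refine tendsto_of_tendsto_of_tendsto_of_le_of_le' hL hU ?_ ?_
  all_goals {
    filter_upwards [eventually_ge_atTop 1] with k hk
    have hk0 : (0:ℝ) < (k:ℝ) := by exact_mod_cast hk
    have hapos : 0 < a k := Real.rpow_pos_of_pos hk0 _
    have hE1 : 1 < Real.exp (a k) := by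
      calc (1:ℝ) = Real.exp 0 := Real.exp_zero.symm
      _ < Real.exp (a k) := Real.exp_lt_exp.mpr hapos
    set E : ℝ := Real.exp (a k) with hE
    set E' : ℝ := Real.exp (a (k-1)) with hE'
    have hEne : E ≠ 0 := (Real.exp_pos _).ne'
    have hE'pos : 0 < E' := Real.exp_pos _
    have hEE' : E' ≤ E := Real.exp_le_exp.mpr
      (Real.rpow_le_rpow (Nat.cast_nonneg _) (Nat.cast_le.mpr (Nat.sub_le k 1)) (by linarith))
    have ht_le : (tblock κ k : ℝ) ≤ E := by
      rw [tblock_eq hκ]; exact Nat.floor_le (Real.exp_pos _).le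
    have ht_gt : E - 1 < (tblock κ k : ℝ) := by
      rw [tblock_eq hκ]; exact Nat.sub_one_lt_floor _
    have ht'_le : (tblock κ (k-1) : ℝ) ≤ E' := by
      rw [tblock_eq hκ]; exact Nat.floor_le (Real.exp_pos _).le
    have ht'_gt : E' - 1 < (tblock κ (k-1) : ℝ) := by
      rw [tblock_eq hκ]; exact Nat.sub_one_lt_floor _
    have ht_pos : (0:ℝ) < (tblock κ k : ℝ) := by linarith
    have hn : (nblock κ k : ℝ) = (tblock κ k : ℝ) - (tblock κ (k-1) : ℝ) := by
      rw [nblock, Nat.cast_sub (tblock_mono hκ (Nat.sub_le k 1))]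
    have hexp1 : Real.exp (-(a k - a (k-1))) = E' / E := by
      rw [neg_sub, Real.exp_sub]
    have hexp2 : Real.exp (-(a k)) = 1 / E := by
      rw [Real.exp_neg, one_div]
    have hkκ : (0:ℝ) ≤ (k:ℝ)^κ := (Real.rpow_pos_of_pos hk0 κ).le
    first
    | · -- lower bound : gL k ≤ R k
        have hid : gL k = ((E - E' - 1) * (k:ℝ)^κ) / E := by
          rw [hgL]; simp only []; rw [hexp1, hexp2]; field_simp
        rw [hid]
        refine div_le_div₀ (by positivity) ?_ ht_pos ht_le
        refine mul_le_mul_of_nonneg_right ?_ hkκ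
        rw [hn]; linarith
    | · -- upper bound : R k ≤ gU k
        have hid : gU k = ((E - E' + 1) * (k:ℝ)^κ) / (E - 1) := by
          rw [hgU]; simp only []; rw [hexp1, hexp2, ← hE]
          have : E - 1 ≠ 0 := by linarith
          field_simp
        rw [hid]
        refine div_le_div₀ (mul_nonneg (by linarith) hkκ) ?_ (by linarith) (by linarith)
        refine mul_le_mul_of_nonneg_right ?_ hkκ
        rw [hn]; linarith
  }

lemma aux_logt (hκ0 : 0 < κ) (hκ : κ < 1/2) :
    Tendsto (fun k : ℕ => Real.log (tblock κ k) / (k:ℝ)^(1-κ)) atTop (nhds 1) := by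
  have hlow : Tendsto (fun k : ℕ =>
      1 + Real.log (1 - Real.exp (-(k:ℝ)^(1-κ))) / (k:ℝ)^(1-κ)) atTop (nhds 1) := by
    have hinner : Tendsto (fun k : ℕ => 1 - Real.exp (-(k:ℝ)^(1-κ))) atTop (nhds 1) := by
      have h1 : Tendsto (fun k : ℕ => Real.exp (-(k:ℝ)^(1-κ))) atTop (nhds 0) :=
        Real.tendsto_exp_atBot.comp (tendsto_neg_atTop_atBot.comp (aux_aTop hκ))
      simpa using tendsto_const_nhds.sub h1
    have hnum : Tendsto (fun k : ℕ => Real.log (1 - Real.exp (-(k:ℝ)^(1-κ)))) atTop (nhds 0) := by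
      have := (Real.continuousAt_log one_ne_zero).tendsto.comp hinner
      simpa [Function.comp_def] using this
    have := (tendsto_const_nhds (x := (1:ℝ))).add (hnum.div_atTop (aux_aTop hκ))
    simpa using this
  refine tendsto_of_tendsto_of_tendsto_of_le_of_le' hlow tendsto_const_nhds ?_ ?_
  · filter_upwards [eventually_ge_atTop 1] with k hk
    have hk0 : (0:ℝ) < (k:ℝ) := by exact_mod_cast hk
    have hapos : 0 < (k:ℝ)^(1-κ) := Real.rpow_pos_of_pos hk0 _
    set A : ℝ := (k:ℝ)^(1-κ)
    have hexplt : Real.exp (-A) < 1 := by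
      rw [← Real.exp_zero]; exact Real.exp_lt_exp.mpr (by linarith)
    have h1 : 0 < 1 - Real.exp (-A) := by linarith
    have hElog : Real.log (Real.exp A - 1) = A + Real.log (1 - Real.exp (-A)) := by
      have hE : Real.exp A - 1 = Real.exp A * (1 - Real.exp (-A)) := by
        rw [mul_sub, mul_one, ← Real.exp_add]; simp
      rw [hE, Real.log_mul (Real.exp_pos _).ne' h1.ne', Real.log_exp]
    have hE1 : 1 < Real.exp A := by
      rw [← Real.exp_zero]; exact Real.exp_lt_exp.mpr hapos
    have ht_gt : Real.exp A - 1 < (tblock κ k : ℝ) := by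
      rw [tblock_eq hκ]; exact Nat.sub_one_lt_floor _
    have hloglog : Real.log (Real.exp A - 1) ≤ Real.log (tblock κ k) :=
      Real.log_le_log (by linarith) ht_gt.le
    rw [show (1:ℝ) + Real.log (1 - Real.exp (-A)) / A = (A + Real.log (1 - Real.exp (-A))) / A by
      field_simp]
    rw [← hElog]
    exact div_le_div_of_nonneg_right hloglog hapos.le
  · filter_upwards [eventually_ge_atTop 1] with k hk
    have hk0 : (0:ℝ) < (k:ℝ) := by exact_mod_cast hk
    have hapos : 0 < (k:ℝ)^(1-κ) := Real.rpow_pos_of_pos hk0 _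
    have ht_le : (tblock κ k : ℝ) ≤ Real.exp ((k:ℝ)^(1-κ)) := by
      rw [tblock_eq hκ]; exact Nat.floor_le (Real.exp_pos _).le
    have ht_pos : (0:ℝ) < (tblock κ k : ℝ) := by
      have := Nat.sub_one_lt_floor (Real.exp ((k:ℝ)^(1-κ)))
      rw [← tblock_eq hκ] at this
      have hE1 := Real.add_one_le_exp ((k:ℝ)^(1-κ))
      linarith
    rw [div_le_one hapos]
    calc Real.log (tblock κ k) ≤ Real.log (Real.exp ((k:ℝ)^(1-κ))) :=
          Real.log_le_log ht_pos ht_le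
    _ = (k:ℝ)^(1-κ) := Real.log_exp _

lemma aux_npos (hκ0 : 0 < κ) (hκ : κ < 1/2) :
    ∀ᶠ k : ℕ in atTop, 0 < (nblock κ k : ℝ) := by
  have hRpos := (auxI hκ0 hκ).eventually (eventually_gt_nhds (by linarith : (0:ℝ) < 1-κ))
  filter_upwards [hRpos] with k hk
  by_contra h
  push_neg at h
  have : (nblock κ k : ℝ) = 0 := le_antisymm h (Nat.cast_nonneg _)
  rw [this] at hk
  simp at hk

lemma aux_logn (hκ0 : 0 < κ) (hκ : κ < 1/2) :
    Tendsto (fun k : ℕ => Real.log (nblock κ k) / (k:ℝ)^(1-κ)) atTop (nhds 1) := by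
  have hlogR : Tendsto (fun k : ℕ =>
      Real.log ((nblock κ k : ℝ) * (k:ℝ)^κ / (tblock κ k : ℝ))) atTop
      (nhds (Real.log (1-κ))) :=
    (Real.continuousAt_log (by linarith : (1:ℝ)-κ ≠ 0)).tendsto.comp (auxI hκ0 hκ)
  have h0 := ((hlogR.div_atTop (aux_aTop hκ)).add (aux_logt hκ0 hκ)).sub (aux_ratio hκ)
  norm_num at h0
  refine h0.congr' ?_
  filter_upwards [eventually_ge_atTop 1, aux_npos hκ0 hκ] with k hk hn
  have hk0 : (0:ℝ) < (k:ℝ) := by exact_mod_cast hk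
  have hapos : 0 < (k:ℝ)^(1-κ) := Real.rpow_pos_of_pos hk0 _
  have hkκ : (0:ℝ) < (k:ℝ)^κ := Real.rpow_pos_of_pos hk0 _
  have ht_pos : (0:ℝ) < (tblock κ k : ℝ) := by
    rw [tblock_eq hκ]
    have := Nat.sub_one_lt_floor (Real.exp ((k:ℝ)^(1-κ)))
    have hE1 := Real.add_one_le_exp ((k:ℝ)^(1-κ))
    linarith
  have hlogR_eq : Real.log ((nblock κ k : ℝ) * (k:ℝ)^κ / (tblock κ k : ℝ))
      = Real.log (nblock κ k) + κ * Real.log k - Real.log (tblock κ k) := by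
    rw [Real.log_div (by positivity) ht_pos.ne', Real.log_mul hn.ne' hkκ.ne',
      Real.log_rpow hk0]
  rw [hlogR_eq]
  ring

lemma aux_logn_pos (hκ0 : 0 < κ) (hκ : κ < 1/2) :
    ∀ᶠ k : ℕ in atTop, 0 < Real.log (nblock κ k) := by
  have h := (aux_logn hκ0 hκ).eventually (eventually_gt_nhds (by norm_num : (1:ℝ)/2 < 1))
  filter_upwards [h, eventually_ge_atTop 1] with k hk hk1
  have hk0 : (0:ℝ) < (k:ℝ) := by exact_mod_cast hk1
  have hapos : 0 < (k:ℝ)^(1-κ) := Real.rpow_pos_of_pos hk0 _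
  have h2 : 0 < Real.log (nblock κ k) / (k:ℝ)^(1-κ) := by linarith
  rcases div_pos_iff.mp h2 with ⟨h3, _⟩ | ⟨_, h3⟩
  · exact h3
  · linarith

lemma aux_main (hκ0 : 0 < κ) (hκ : κ < 1/2) :
    Tendsto (fun k : ℕ =>
        (Real.sqrt (nblock κ k) / Real.log (nblock κ k) ^ κ) *
          ((k : ℝ) ^ (κ + κ * (1 / 2 - κ)) / Real.sqrt (tblock κ k))) atTop
      (nhds (Real.sqrt (1 - κ))) := by
  have hinv : Tendsto (fun k : ℕ => (k:ℝ)^(1-κ) / Real.log (nblock κ k)) atTop (nhds 1) := by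
    have := (aux_logn hκ0 hκ).inv₀ one_ne_zero
    simpa only [inv_div, inv_one] using this
  have hsq : Tendsto (fun k : ℕ =>
      Real.sqrt ((nblock κ k : ℝ) * (k:ℝ)^κ / (tblock κ k : ℝ))) atTop
      (nhds (Real.sqrt (1-κ))) :=
    (Real.continuous_sqrt.tendsto _).comp (auxI hκ0 hκ)
  have hpow : Tendsto (fun k : ℕ =>
      ((k:ℝ)^(1-κ) / Real.log (nblock κ k)) ^ κ) atTop (nhds 1) := by
    have := ((Real.continuousAt_rpow_const 1 κ (Or.inr hκ0.le)).tendsto).comp hinv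
    simpa [Function.comp_def] using this
  have hmain := hsq.mul hpow
  rw [mul_one] at hmain
  refine hmain.congr' ?_
  filter_upwards [eventually_ge_atTop 1, aux_npos hκ0 hκ, aux_logn_pos hκ0 hκ]
    with k hk hn hL
  have hk0 : (0:ℝ) < (k:ℝ) := by exact_mod_cast hk
  have hkκ : (0:ℝ) < (k:ℝ)^κ := Real.rpow_pos_of_pos hk0 _
  have hapos : 0 < (k:ℝ)^(1-κ) := Real.rpow_pos_of_pos hk0 _
  have ht_pos : (0:ℝ) < (tblock κ k : ℝ) := by
    rw [tblock_eq hκ]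
    have := Nat.sub_one_lt_floor (Real.exp ((k:ℝ)^(1-κ)))
    have hE1 := Real.add_one_le_exp ((k:ℝ)^(1-κ))
    linarith
  set L : ℝ := Real.log (nblock κ k)
  have h1 : Real.sqrt ((nblock κ k : ℝ) * (k:ℝ)^κ / (tblock κ k : ℝ))
      = Real.sqrt (nblock κ k) * (k:ℝ)^(κ * (1/2 : ℝ)) / Real.sqrt (tblock κ k) := by
    rw [Real.sqrt_div (by positivity), Real.sqrt_mul (by positivity),
      show Real.sqrt ((k:ℝ)^κ) = (k:ℝ)^(κ*(1/2:ℝ)) from by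
        rw [Real.sqrt_eq_rpow, ← Real.rpow_mul hk0.le]]
  have h2 : ((k:ℝ)^(1-κ) / L) ^ κ = (k:ℝ)^((1-κ)*κ) / L ^ κ := by
    rw [Real.div_rpow (by positivity) hL.le, ← Real.rpow_mul hk0.le]
  have h3 : (k:ℝ)^(κ * (1/2:ℝ)) * (k:ℝ)^((1-κ)*κ) = (k:ℝ)^(κ + κ*(1/2-κ)) := by
    rw [← Real.rpow_add hk0]; ring_nf
  have hLκ : (0:ℝ) < L ^ κ := Real.rpow_pos_of_pos hL _
  have hst : (0:ℝ) < Real.sqrt (tblock κ k) := Real.sqrt_pos.mpr ht_pos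
  rw [h1, h2, ← h3]
  field_simp

end Aux

theorem stmt16 (κ : ℝ) (hκ0 : 0 < κ) (hκ : κ < 1 / 2) :
    0 < κ * (1 / 2 - κ) ∧
    Tendsto (fun k : ℕ => (nblock κ k : ℝ) * (k : ℝ) ^ κ / (tblock κ k : ℝ)) atTop
      (nhds (1 - κ)) ∧
    Tendsto (fun k : ℕ =>
        (Real.sqrt (nblock κ k) / Real.log (nblock κ k) ^ κ) *
          ((k : ℝ) ^ (κ + κ * (1 / 2 - κ)) / Real.sqrt (tblock κ k))) atTop
      (nhds (Real.sqrt (1 - κ))) :=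
  ⟨mul_pos hκ0 (by linarith), auxI hκ0 hκ, aux_main hκ0 hκ⟩
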